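/- Let K be a simplicial complex on a finite vertex set V, let σ be a face of K with |σ| ≥ 2, and let v_σ ∉ V be a new vertex. Then the facets of ss_σ(K) are exactly: (i) the facets F of K with σ ⊄ F, and (ii) the sets (F \ {x}) ∪ {v_σ} where F is a facet of K with σ ⊆ F and x ∈ σ. -/

import Mathlib

/-- `K` is an abstract simplicial complex: its faces are nonempty finite sets,
closed under taking nonempty subsets. -/
def IsSimpComplex {A : Type*} (K : Set (Finset A)) : Prop :=
  (∀ σ ∈ K, σ.Nonempty) ∧ ∀ σ ∈ K, ∀ τ : Finset A, τ ⊆ σ → τ.Nonempty → τ ∈ K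

/-- `K` is a simplicial complex on the vertex set `V`: every face is a subset of `V`. -/
def OnVertexSet {A : Type*} (K : Set (Finset A)) (V : Set A) : Prop :=
  ∀ σ ∈ K, ∀ x ∈ σ, x ∈ V

/-- The link of a face `σ` of `K`: `lk_K(σ) = {τ ∈ K : τ ∪ σ ∈ K and τ ∩ σ = ∅}`. -/
def linkOf {A : Type*} [DecidableEq A] (K : Set (Finset A)) (σ : Finset A) :
    Set (Finset A) :=
  {τ | τ ∈ K ∧ τ ∪ σ ∈ K ∧ τ ∩ σ = ∅}

/-- The star of a face `σ` of `K`: `st_K(σ) = {τ ∈ K : τ ∪ σ ∈ K}`. -/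
def starOf {A : Type*} [DecidableEq A] (K : Set (Finset A)) (σ : Finset A) :
    Set (Finset A) :=
  {τ | τ ∈ K ∧ τ ∪ σ ∈ K}

/-- The join of two simplicial complexes: the nonempty sets `σ ∪ τ` with
`σ ∈ K ∪ {∅}` and `τ ∈ L ∪ {∅}`. -/
def joinC {A : Type*} [DecidableEq A] (K L : Set (Finset A)) : Set (Finset A) :=
  {ρ | ρ.Nonempty ∧ ∃ σ τ : Finset A, (σ ∈ K ∨ σ = ∅) ∧ (τ ∈ L ∨ τ = ∅) ∧ ρ = σ ∪ τ}

/-- The wedge of `K` at the vertex `v`, introducing the new vertex `v'`: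
`wed_v(K) = (I ∗ lk_K(v)) ∪ (∂I ∗ K₋ᵥ)` where `I` is the full complex on `{v, v'}`,
`∂I` the complex with faces `{v}, {v'}`, and `K₋ᵥ = {σ ∈ K : v ∉ σ}`. -/
def wed {A : Type*} [DecidableEq A] (K : Set (Finset A)) (v v' : A) : Set (Finset A) :=
  joinC ({{v}, {v'}, {v, v'}} : Set (Finset A)) (linkOf K {v}) ∪
    joinC ({{v}, {v'}} : Set (Finset A)) {σ | σ ∈ K ∧ v ∉ σ}

/-- The boundary complex `∂σ` of a finite set `σ`: all nonempty proper subsets of `σ`. -/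
def bdry {A : Type*} (σ : Finset A) : Set (Finset A) :=
  {τ | τ ⊂ σ ∧ τ.Nonempty}

/-- The stellar subdivision of `K` at the face `σ`, with new vertex `w`:
`ss_σ(K) = (K \ st_K(σ)) ∪ ({w} ∗ ∂σ ∗ lk_K(σ))`. -/
def stellar {A : Type*} [DecidableEq A] (K : Set (Finset A)) (σ : Finset A) (w : A) :
    Set (Finset A) :=
  (K \ starOf K σ) ∪ joinC ({{w}} : Set (Finset A)) (joinC (bdry σ) (linkOf K σ))

/-- `F` is a facet (a face maximal under inclusion) of `K`. -/
def IsFacetOf {A : Type*} (K : Set (Finset A)) (F : Finset A) : Prop :=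
  F ∈ K ∧ ∀ G ∈ K, F ⊆ G → F = G

/-- A minimal non-face of `K` with respect to the vertex set `V`: a finite subset
`τ ⊆ V` with `τ ∉ K` such that every nonempty proper subset of `τ` is a face of `K`. -/
def IsMinNonFace {A : Type*} (K : Set (Finset A)) (V : Set A) (τ : Finset A) : Prop :=
  (∀ x ∈ τ, x ∈ V) ∧ τ ∉ K ∧ ∀ ρ : Finset A, ρ ⊂ τ → ρ.Nonempty → ρ ∈ K

/-- Perform successive wedge operations at the vertex `(v, 0)`; the `t`-th introduces
the new vertex `(v, t)`.  Here the pair `(v, t)` encodes the vertex copy `v⁽ᵗ⁾`,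
identifying `v⁽⁰⁾` with `v`. -/
def wedIter (K : Set (Finset (ℕ × ℕ))) (v : ℕ) : ℕ → Set (Finset (ℕ × ℕ))
  | 0 => K
  | t + 1 => wed (wedIter K v t) (v, 0) (v, t + 1)

/-- The `J`-construction `K(J)` of a simplicial complex `K` on `[m] = {1, …, m}`
(the vertex `v` being encoded as the pair `(v, 0)`): for each `v ∈ [m]`, perform
`j v - 1` successive wedge operations at `v`, the `t`-th of which introduces the
new vertex `v⁽ᵗ⁾ = (v, t)`. -/
def KJ (K : Set (Finset (ℕ × ℕ))) (m : ℕ) (j : ℕ → ℕ) : Set (Finset (ℕ × ℕ)) :=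
  (List.range m).foldl (fun L v => wedIter L (v + 1) (j (v + 1) - 1)) K

lemma finK {A : Type*} [DecidableEq A] {V : Set A} (hVfin : V.Finite) {K : Set (Finset A)}
    (hKV : OnVertexSet K V) : K.Finite := by
  apply Set.Finite.subset (Finset.finite_toSet hVfin.toFinset.powerset)
  intro G hG
  simp only [Finset.coe_powerset, Set.mem_preimage, Set.mem_powerset_iff, Finset.mem_coe,
    Finset.mem_powerset]
  intro x hx
  exact hVfin.mem_toFinset.mpr (hKV G hG x hx)

lemma exists_facet {A : Type*} [DecidableEq A] {V : Set A} (hVfin : V.Finite)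
    {K : Set (Finset A)} (hKV : OnVertexSet K V) {τ : Finset A} (hτ : τ ∈ K) :
    ∃ F, IsFacetOf K F ∧ τ ⊆ F := by
  have hfin : ({G | G ∈ K ∧ τ ⊆ G} : Set (Finset A)).Finite :=
    (finK hVfin hKV).subset (fun G hG => hG.1)
  obtain ⟨F, hF, hmax'⟩ := hfin.exists_maximalFor Finset.card _ ⟨τ, hτ, Finset.Subset.refl τ⟩
  have hmax : ∀ G ∈ ({G | G ∈ K ∧ τ ⊆ G} : Set (Finset A)), F.card ≤ G.card → F.card = G.card :=
    fun G hG h => le_antisymm h (hmax' hG h)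
  refine ⟨F, ⟨hF.1, ?_⟩, hF.2⟩
  intro G hG hFG
  have hGmem : G ∈ {G | G ∈ K ∧ τ ⊆ G} := ⟨hG, hF.2.trans hFG⟩
  have := hmax G hGmem (Finset.card_le_card hFG)
  exact Finset.eq_of_subset_of_card_le hFG (le_of_eq this.symm)

lemma mem_J {A : Type*} [DecidableEq A] {K : Set (Finset A)} (hK : IsSimpComplex K)
    {σ : Finset A} (hσ : σ ∈ K) (hσne : σ.Nonempty) (w : A) (τ : Finset A) :
    τ ∈ joinC ({{w}} : Set (Finset A)) (joinC (bdry σ) (linkOf K σ)) ↔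
      τ.Nonempty ∧ ∃ s α β : Finset A, s ⊆ {w} ∧ α ⊆ σ ∧ α ≠ σ ∧ β ∪ σ ∈ K ∧ β ∩ σ = ∅ ∧
        τ = s ∪ α ∪ β := by
  constructor
  · rintro ⟨hne, s, t, hs, ht, rfl⟩
    have hs' : s ⊆ {w} := by
      rcases hs with hs | hs
      · rw [Set.mem_singleton_iff] at hs; rw [hs]
      · rw [hs]; exact Finset.empty_subset _
    refine ⟨hne, ?_⟩
    rcases ht with ht | rfl
    · obtain ⟨htne, α, β, hα, hβ, rfl⟩ := ht
      have hα' : α ⊆ σ ∧ α ≠ σ := by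
        rcases hα with hα | rfl
        · exact ⟨hα.1.subset, hα.1.ne⟩
        · exact ⟨Finset.empty_subset _, (Finset.nonempty_iff_ne_empty.mp hσne).symm⟩
      have hβ' : β ∪ σ ∈ K ∧ β ∩ σ = ∅ := by
        rcases hβ with hβ | rfl
        · exact ⟨hβ.2.1, hβ.2.2⟩
        · simpa using hσ
      exact ⟨s, α, β, hs', hα'.1, hα'.2, hβ'.1, hβ'.2, (Finset.union_assoc s α β).symm⟩
    · exact ⟨s, ∅, ∅, hs', Finset.empty_subset _,
        (Finset.nonempty_iff_ne_empty.mp hσne).symm, by simpa using hσ, by simp, by simp⟩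
  · rintro ⟨hne, s, α, β, hs, hασ, hαnσ, hβK, hβσ, rfl⟩
    refine ⟨hne, s, α ∪ β, ?_, ?_, Finset.union_assoc s α β⟩
    · rcases Finset.subset_singleton_iff.mp hs with rfl | rfl
      · exact Or.inr rfl
      · exact Or.inl rfl
    · rcases (α ∪ β).eq_empty_or_nonempty with h | h
      · exact Or.inr h
      · refine Or.inl ⟨h, α, β, ?_, ?_, rfl⟩
        · rcases α.eq_empty_or_nonempty with rfl | hαne
          · exact Or.inr rfl
          · exact Or.inl ⟨Finset.ssubset_iff_subset_ne.mpr ⟨hασ, hαnσ⟩, hαne⟩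
        · rcases β.eq_empty_or_nonempty with rfl | hβne
          · exact Or.inr rfl
          · exact Or.inl ⟨hK.2 _ hβK β Finset.subset_union_left hβne, hβK, hβσ⟩

lemma mem_stellar {A : Type*} [DecidableEq A] (K : Set (Finset A)) (σ : Finset A) (w : A)
    (τ : Finset A) : τ ∈ stellar K σ w ↔
      (τ ∈ K ∧ τ ∪ σ ∉ K) ∨ τ ∈ joinC ({{w}} : Set (Finset A)) (joinC (bdry σ) (linkOf K σ)) := by
  unfold stellar starOf
  constructor
  · rintro (⟨h1, h2⟩ | h)
    · exact Or.inl ⟨h1, fun hc => h2 ⟨h1, hc⟩⟩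
    · exact Or.inr h
  · rintro (⟨h1, h2⟩ | h)
    · exact Or.inl ⟨h1, fun hc => h2 hc.2⟩
    · exact Or.inr h
theorem stmt7 {A : Type*} [DecidableEq A] (V : Set A) (hVfin : V.Finite)
    (K : Set (Finset A)) (hK : IsSimpComplex K) (hKV : OnVertexSet K V)
    (σ : Finset A) (hσ : σ ∈ K) (hσ2 : 2 ≤ σ.card) (w : A) (hw : w ∉ V) :
    ∀ F : Finset A, IsFacetOf (stellar K σ w) F ↔
      (IsFacetOf K F ∧ ¬ σ ⊆ F) ∨
        ∃ G x, IsFacetOf K G ∧ σ ⊆ G ∧ x ∈ σ ∧ F = G.erase x ∪ {w} := by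
  intro F
  have hσne : σ.Nonempty := Finset.card_pos.mp (by omega)
  have hwK : ∀ G ∈ K, w ∉ G := fun G hG h => hw (hKV G hG w h)
  constructor
  · rintro ⟨hFmem, hFmax⟩
    rcases (mem_stellar K σ w F).mp hFmem with ⟨hFK, hFs⟩ | hFJ
    · -- Case: F ∈ K \ star
      left
      refine ⟨⟨hFK, ?_⟩, fun hσF => hFs (by rwa [Finset.union_eq_left.mpr hσF])⟩
      intro G hG hFG
      by_contra hne
      obtain ⟨y, hyG, hyF⟩ := Finset.exists_of_ssubset (hFG.ssubset_of_ne hne)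
      have h1 : insert y F ∈ K :=
        hK.2 G hG _ (Finset.insert_subset hyG hFG) (Finset.insert_nonempty _ _)
      have h2 : insert y F ∪ σ ∉ K := by
        intro hc
        exact hFs (hK.2 _ hc (F ∪ σ)
          (Finset.union_subset_union_left (Finset.subset_insert _ _))
          (by obtain ⟨y, hy⟩ := hσne; exact ⟨y, Finset.mem_union_right _ hy⟩))
      have heq := hFmax (insert y F) ((mem_stellar K σ w _).mpr (Or.inl ⟨h1, h2⟩))
        (Finset.subset_insert _ _)
      exact hyF (by rw [heq]; exact Finset.mem_insert_self y F)
    · -- Case: F ∈ J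
      right
      rw [mem_J hK hσ hσne] at hFJ
      obtain ⟨hFne, s, α, β, hs, hασ, hαnσ, hβK, hβσ, hFeq⟩ := hFJ
      obtain ⟨x, hxσ, hxα⟩ : ∃ x, x ∈ σ ∧ x ∉ α := by
        by_contra h
        push_neg at h
        exact hαnσ (Finset.Subset.antisymm hασ h)
      obtain ⟨G, hGfacet, hσβG⟩ := exists_facet hVfin hKV
        (show σ ∪ β ∈ K by rwa [Finset.union_comm])
      have hσG : σ ⊆ G := Finset.subset_union_left.trans hσβG
      have hGeq : σ ∪ G \ σ = G := Finset.union_sdiff_of_subset hσG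
      have hF'mem : {w} ∪ σ.erase x ∪ G \ σ ∈ stellar K σ w := by
        rw [mem_stellar]
        refine Or.inr ((mem_J hK hσ hσne w _).mpr
          ⟨⟨w, by simp⟩, {w}, σ.erase x, G \ σ, Finset.Subset.refl _, Finset.erase_subset x σ,
            (Finset.erase_ssubset hxσ).ne, ?_, Finset.sdiff_inter_self σ G, rfl⟩)
        rw [Finset.union_comm, hGeq]
        exact hGfacet.1
      have hsub : F ⊆ {w} ∪ σ.erase x ∪ G \ σ := by
        rw [hFeq]
        refine Finset.union_subset_union (Finset.union_subset_union hs
          (Finset.subset_erase.mpr ⟨hασ, hxα⟩)) ?_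
        intro b hb
        refine Finset.mem_sdiff.mpr ⟨hσβG (Finset.mem_union_right _ hb), fun hbσ => ?_⟩
        exact absurd (Finset.mem_inter.mpr ⟨hb, hbσ⟩)
          (by rw [hβσ]; exact Finset.notMem_empty b)
      have hFeq' := hFmax _ hF'mem hsub
      refine ⟨G, x, hGfacet, hσG, hxσ, ?_⟩
      rw [hFeq']
      have herase : G.erase x = σ.erase x ∪ G \ σ := by
        rw [← hGeq, Finset.erase_union_distrib,
          Finset.erase_eq_of_notMem (by simp [hxσ] : x ∉ G \ σ), hGeq]
      rw [herase]
      ext a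
      simp only [Finset.mem_union]
      tauto
  · rintro (⟨⟨hFK, hFmaxK⟩, hσF⟩ | ⟨G, x, ⟨hGK, hGmax⟩, hσG, hxσ, rfl⟩)
    · -- Case (i)
      have hFσ : F ∪ σ ∉ K := by
        intro hc
        apply hσF
        have := hFmaxK _ hc Finset.subset_union_left
        rw [this]
        exact Finset.subset_union_right
      refine ⟨(mem_stellar _ _ _ _).mpr (Or.inl ⟨hFK, hFσ⟩), ?_⟩
      intro F' hF' hFF'
      rcases (mem_stellar K σ w F').mp hF' with ⟨h1, _⟩ | hJ'
      · exact hFmaxK _ h1 hFF'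
      · rw [mem_J hK hσ hσne] at hJ'
        obtain ⟨_, s, α, β, hs, hασ, _, hβK, hβσ, rfl⟩ := hJ'
        have hwF : w ∉ F := hwK F hFK
        have hFsub : F ⊆ σ ∪ β := by
          intro a ha
          have h := hFF' ha
          simp only [Finset.mem_union] at h ⊢
          rcases h with (h | h) | h
          · exact absurd (Finset.mem_singleton.mp (hs h) ▸ ha) hwF
          · exact Or.inl (hασ h)
          · exact Or.inr h
        have hFeq : F = σ ∪ β := hFmaxK _ (by rwa [Finset.union_comm] at hβK) hFsub
        exact absurd (by rw [hFeq]; exact Finset.subset_union_left : σ ⊆ F) hσF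
    · -- Case (ii)
      have hGeq : σ ∪ G \ σ = G := Finset.union_sdiff_of_subset hσG
      have hxβ : x ∉ G \ σ := by simp [hxσ]
      have hβσ : (G \ σ) ∩ σ = ∅ := Finset.sdiff_inter_self σ G
      have hβK : G \ σ ∪ σ ∈ K := by rw [Finset.union_comm, hGeq]; exact hGK
      have herase : G.erase x = σ.erase x ∪ G \ σ := by
        rw [← hGeq, Finset.erase_union_distrib, Finset.erase_eq_of_notMem hxβ, hGeq]
      have hFrepr : G.erase x ∪ {w} = {w} ∪ σ.erase x ∪ G \ σ := by
        rw [herase]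
        ext a
        simp only [Finset.mem_union]
        tauto
      have hmemJ : G.erase x ∪ {w} ∈ stellar K σ w := by
        rw [mem_stellar, hFrepr]
        exact Or.inr ((mem_J hK hσ hσne w _).mpr
          ⟨⟨w, by simp⟩, {w}, σ.erase x, G \ σ, Finset.Subset.refl _, Finset.erase_subset x σ,
            (Finset.erase_ssubset hxσ).ne, hβK, hβσ, rfl⟩)
      refine ⟨hmemJ, ?_⟩
      intro F' hF' hsub'
      rcases (mem_stellar K σ w F').mp hF' with ⟨h1, _⟩ | hJ'
      · exact absurd (hKV F' h1 w (hsub' (by simp))) hw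
      · rw [mem_J hK hσ hσne] at hJ'
        obtain ⟨_, s', α', β', hs', hα'σ, hα'ne, hβ'K, hβ'σ, rfl⟩ := hJ'
        have hwσ : w ∉ σ := fun h => hw (hKV σ hσ w h)
        have hβ'V : ∀ b ∈ β', b ∈ V := fun b hb =>
          hKV _ hβ'K b (Finset.mem_union_left _ hb)
        -- β ⊆ β'
        have hββ' : G \ σ ⊆ β' := by
          intro b hb
          have hbG := (Finset.mem_sdiff.mp hb).1
          have hbσ := (Finset.mem_sdiff.mp hb).2
          have hbw : b ≠ w := fun h => hw (h ▸ hKV G hGK b hbG)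
          have hbF : b ∈ G.erase x ∪ {w} :=
            Finset.mem_union_left _ (Finset.mem_erase.mpr ⟨fun h => hbσ (h ▸ hxσ), hbG⟩)
          have h := hsub' hbF
          simp only [Finset.mem_union] at h
          rcases h with (h | h) | h
          · exact absurd (Finset.mem_singleton.mp (hs' h)) hbw
          · exact absurd (hα'σ h) hbσ
          · exact h
        have hGβ' : G = σ ∪ β' := by
          apply hGmax
          · rwa [Finset.union_comm] at hβ'K
          · rw [← hGeq]
            exact Finset.union_subset_union (Finset.Subset.refl _) hββ'
        have hβ'β : β' ⊆ G \ σ := by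
          intro b hb
          refine Finset.mem_sdiff.mpr ⟨by rw [hGβ']; exact Finset.mem_union_right _ hb,
            fun hbσ => ?_⟩
          exact absurd (Finset.mem_inter.mpr ⟨hb, hbσ⟩)
            (by rw [hβ'σ]; exact Finset.notMem_empty b)
        have hβeq : β' = G \ σ := Finset.Subset.antisymm hβ'β hββ'
        -- σ.erase x ⊆ α'
        have hαα' : σ.erase x ⊆ α' := by
          intro a ha
          have haσ := Finset.mem_of_mem_erase ha
          have haw : a ≠ w := fun h => hwσ (h ▸ haσ)
          have haF : a ∈ G.erase x ∪ {w} := Finset.mem_union_left _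
            (Finset.mem_erase.mpr ⟨(Finset.mem_erase.mp ha).1, hσG haσ⟩)
          have h := hsub' haF
          simp only [Finset.mem_union] at h
          rcases h with (h | h) | h
          · exact absurd (Finset.mem_singleton.mp (hs' h)) haw
          · exact h
          · exact absurd (Finset.mem_inter.mpr ⟨h, haσ⟩)
              (by rw [hβ'σ]; exact Finset.notMem_empty a)
        have hxα' : x ∉ α' := by
          intro hxa
          apply hα'ne
          apply Finset.Subset.antisymm hα'σ
          intro a ha
          rcases eq_or_ne a x with rfl | hax
          · exact hxa
          · exact hαα' (Finset.mem_erase.mpr ⟨hax, ha⟩)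
        have hαeq : α' = σ.erase x := Finset.Subset.antisymm
          (Finset.subset_erase.mpr ⟨hα'σ, hxα'⟩) hαα'
        apply Finset.Subset.antisymm hsub'
        rw [hFrepr, hαeq, hβeq]
        exact Finset.union_subset_union (Finset.union_subset_union hs'
          (Finset.Subset.refl _)) (Finset.Subset.refl _)
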